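/- Let H : ℝ^d × ℝ → ℝ be C² with everywhere positive definite Hessian and superlinear, and let A : ℝ^d → ℝ be C² with everywhere positive definite Hessian and satisfy A(p') ≥ min_p H(p',p) for all p'. For Z = (z', z) ∈ ℝ^d × ℝ, set 𝔊(Z) = sup { p'·z' + p z − λ : (p',p,λ) with H(p',p) = λ ≥ A(p') }. If this supremum is attained at some (p',p,λ) with H(p',p) = λ ≥ A(p'), then there exists α ∈ [0,1] such that z = α ∂_p H(p',p) and z' = α ∇_{p'} H(p',p) + (1−α) ∇A(p'). -/

import Mathlib

open scoped RealInnerProductSpace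


open Filter Set
open scoped RealInnerProductSpace

lemma aux_lin_halfspace {V : Type*} [AddCommGroup V] [Module ℝ V]
    (F G : V →ₗ[ℝ] ℝ) (hFG : ∀ u, G u < 0 → F u ≤ 0) (u₀ : V) (hu₀ : G u₀ < 0) :
    ∃ c : ℝ, 0 ≤ c ∧ ∀ u, F u = c * G u := by
  have hGne : G u₀ ≠ 0 := ne_of_lt hu₀
  obtain ⟨u₁, hGu₁⟩ : ∃ u₁, G u₁ = -1 := by
    refine ⟨(-(G u₀)⁻¹) • u₀, ?_⟩
    rw [map_smul, smul_eq_mul]; field_simp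
  have hFu₁ : F u₁ ≤ 0 := hFG u₁ (by rw [hGu₁]; norm_num)
  have hker : ∀ w, G w = 0 → F w ≤ 0 := by
    intro w hw
    by_contra hpos
    push_neg at hpos
    have hs : ∀ s : ℝ, 0 < s → F w ≤ s * (-F u₁) := by
      intro s hs
      have : G (w + s • u₁) < 0 := by
        rw [map_add, map_smul, hGu₁, hw, smul_eq_mul]; nlinarith
      have := hFG _ this
      rw [map_add, map_smul, smul_eq_mul] at this
      nlinarith
    have h1 := hs (F w / (-F u₁ + 1)) (div_pos hpos (by linarith))
    have hlt : F w / (-F u₁ + 1) * (-F u₁) < F w := by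
      rw [div_mul_eq_mul_div, div_lt_iff₀ (by linarith)]
      nlinarith
    linarith
  have hker' : ∀ w, G w = 0 → F w = 0 := by
    intro w hw
    have h1 := hker w hw
    have h2 := hker (-w) (by rw [map_neg, hw, neg_zero])
    rw [map_neg] at h2
    linarith
  refine ⟨-F u₁, by linarith, fun u => ?_⟩
  have hw : G (u + G u • u₁) = 0 := by
    rw [map_add, map_smul, hGu₁, smul_eq_mul]; ring
  have := hker' _ hw
  rw [map_add, map_smul, smul_eq_mul] at this
  nlinarith [this]

lemma aux_lin_max {V : Type*} [AddCommGroup V] [Module ℝ V]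
    (T a L : V →ₗ[ℝ] ℝ) (h : ∀ v, T v ≤ max (a v) (L v)) :
    ∃ c : ℝ, 0 ≤ c ∧ c ≤ 1 ∧ ∀ v, T v = (1 - c) * a v + c * L v := by
  have hS : ∀ v, T v - a v ≤ max 0 (L v - a v) := by
    intro v
    have := h v
    rcases le_total (L v) (a v) with h1 | h1
    · rw [max_eq_left h1] at this
      exact le_trans (by linarith) (le_max_left _ _)
    · rw [max_eq_right h1] at this
      exact le_trans (by linarith) (le_max_right 0 (L v - a v))
  have hkerD : ∀ v, L v - a v = 0 → T v - a v = 0 := by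
    intro v hv
    have h1 := hS v; rw [hv, max_self] at h1
    have h2 := hS (-v)
    rw [map_neg, map_neg, map_neg] at h2
    have he : -L v - -a v = 0 := by linarith
    rw [he, max_self] at h2
    linarith
  by_cases hD : ∀ v, L v - a v = 0
  · refine ⟨0, le_refl 0, by norm_num, fun v => ?_⟩
    have h1 := hkerD v (hD v)
    linarith
  · push_neg at hD
    obtain ⟨w, hw⟩ := hD
    obtain ⟨v₁, hDv₁⟩ : ∃ v₁, L v₁ - a v₁ = 1 := by
      refine ⟨(L w - a w)⁻¹ • w, ?_⟩
      rw [map_smul, map_smul, smul_eq_mul, smul_eq_mul]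
      field_simp
    refine ⟨T v₁ - a v₁, ?_, ?_, ?_⟩
    · have h2 := hS (-v₁)
      rw [map_neg, map_neg, map_neg] at h2
      have he : -L v₁ - -a v₁ = -1 := by linarith
      rw [he] at h2
      have : max (0:ℝ) (-1) = 0 := by norm_num
      rw [this] at h2
      linarith
    · have h1 := hS v₁; rw [hDv₁] at h1
      have : max (0:ℝ) 1 = 1 := by norm_num
      rw [this] at h1; linarith
    · intro v
      have hw0 : L (v - (L v - a v) • v₁) - a (v - (L v - a v) • v₁) = 0 := by
        rw [map_sub, map_sub, map_smul, map_smul, smul_eq_mul, smul_eq_mul]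
        linear_combination (-(L v - a v)) * hDv₁
      have h3 := hkerD _ hw0
      rw [map_sub, map_sub, map_smul, map_smul, smul_eq_mul, smul_eq_mul] at h3
      linear_combination h3

lemma aux_le_max_deriv {g₁ g₂ : ℝ → ℝ} {a₁ a₂ : ℝ}
    (h₁ : HasDerivAt g₁ a₁ 0) (h₂ : HasDerivAt g₂ a₂ 0) {c : ℝ}
    (h : ∀ᶠ t in nhdsWithin 0 (Set.Ioi (0:ℝ)), c * t ≤ max (g₁ t - g₁ 0) (g₂ t - g₂ 0)) :
    c ≤ max a₁ a₂ := by
  have hmono : nhdsWithin (0:ℝ) (Set.Ioi 0) ≤ nhdsWithin 0 {(0:ℝ)}ᶜ :=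
    nhdsWithin_mono _ (fun x hx => by
      simp only [mem_compl_iff, mem_singleton_iff]; exact ne_of_gt hx)
  have hs₁ : Tendsto (slope g₁ 0) (nhdsWithin 0 (Set.Ioi 0)) (nhds a₁) :=
    (hasDerivAt_iff_tendsto_slope.1 h₁).mono_left hmono
  have hs₂ : Tendsto (slope g₂ 0) (nhdsWithin 0 (Set.Ioi 0)) (nhds a₂) :=
    (hasDerivAt_iff_tendsto_slope.1 h₂).mono_left hmono
  have hmax : Tendsto (fun t => max (slope g₁ 0 t) (slope g₂ 0 t))
      (nhdsWithin 0 (Set.Ioi 0)) (nhds (max a₁ a₂)) := hs₁.max hs₂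
  refine ge_of_tendsto hmax ?_
  filter_upwards [h, self_mem_nhdsWithin] with t ht ht0
  have ht0' : (0:ℝ) < t := ht0
  rcases le_max_iff.1 ht with h' | h'
  · refine le_max_of_le_left ?_
    rw [slope_def_field, sub_zero, le_div_iff₀ ht0']
    linarith
  · refine le_max_of_le_right ?_
    rw [slope_def_field, sub_zero, le_div_iff₀ ht0']
    linarith

lemma aux_le_deriv {g : ℝ → ℝ} {a : ℝ} (hg : HasDerivAt g a 0) {c : ℝ}
    (h : ∀ᶠ t in nhdsWithin 0 (Set.Ioi (0:ℝ)), c * t ≤ g t - g 0) : c ≤ a := by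
  have := aux_le_max_deriv hg hg (c := c) (by filter_upwards [h] with t ht; simpa using ht)
  simpa using this

lemma aux_ev_neg {ψ : ℝ → ℝ} {ψ' : ℝ} (h : HasDerivAt ψ ψ' 0) (h0 : ψ 0 ≤ 0)
    (h' : ψ 0 = 0 → ψ' < 0) : ∀ᶠ t in nhdsWithin 0 (Set.Ioi (0:ℝ)), ψ t ≤ 0 := by
  rcases lt_or_eq_of_le h0 with hlt | heq
  · have : ∀ᶠ t in nhds (0:ℝ), ψ t < 0 :=
      h.continuousAt.eventually_lt continuousAt_const hlt
    exact (this.filter_mono nhdsWithin_le_nhds).mono (fun t ht => le_of_lt ht)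
  · have hψ' := h' heq
    have hmono : nhdsWithin (0:ℝ) (Set.Ioi 0) ≤ nhdsWithin 0 {(0:ℝ)}ᶜ :=
      nhdsWithin_mono _ (fun x hx => by
        simp only [mem_compl_iff, mem_singleton_iff]; exact ne_of_gt hx)
    have hs : Tendsto (slope ψ 0) (nhdsWithin 0 (Set.Ioi 0)) (nhds ψ') :=
      (hasDerivAt_iff_tendsto_slope.1 h).mono_left hmono
    have hev : ∀ᶠ t in nhdsWithin 0 (Set.Ioi (0:ℝ)), slope ψ 0 t < 0 :=
      hs.eventually_lt_const hψ'
    filter_upwards [hev, self_mem_nhdsWithin] with t ht ht0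
    have ht0' : (0:ℝ) < t := ht0
    rw [slope_def_field, sub_zero, div_neg_iff] at ht
    rcases ht with ⟨h1, h2⟩ | ⟨h1, h2⟩
    · linarith
    · linarith [heq]

lemma aux_ev_lt_left {h : ℝ → ℝ} {h' : ℝ} {p : ℝ} (hd : HasDerivAt h h' p) (hp : 0 < h') :
    ∀ᶠ q in nhdsWithin p (Set.Iio p), h q < h p := by
  have hmono : nhdsWithin p (Set.Iio p) ≤ nhdsWithin p {p}ᶜ :=
    nhdsWithin_mono _ (fun x hx => by
      simp only [mem_compl_iff, mem_singleton_iff]; exact ne_of_lt hx)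
  have hs : Tendsto (slope h p) (nhdsWithin p (Set.Iio p)) (nhds h') :=
    (hasDerivAt_iff_tendsto_slope.1 hd).mono_left hmono
  have hev : ∀ᶠ q in nhdsWithin p (Set.Iio p), 0 < slope h p q :=
    hs.eventually_const_lt hp
  filter_upwards [hev, self_mem_nhdsWithin] with q hq hq0
  have hq0' : q < p := hq0
  rw [slope_def_field, div_pos_iff] at hq
  rcases hq with ⟨h1, h2⟩ | ⟨h1, h2⟩
  · linarith
  · linarith

lemma aux_ev_lt_right {h : ℝ → ℝ} {h' : ℝ} {p : ℝ} (hd : HasDerivAt h h' p) (hp : h' < 0) :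
    ∀ᶠ q in nhdsWithin p (Set.Ioi p), h q < h p := by
  have hmono : nhdsWithin p (Set.Ioi p) ≤ nhdsWithin p {p}ᶜ :=
    nhdsWithin_mono _ (fun x hx => by
      simp only [mem_compl_iff, mem_singleton_iff]; exact ne_of_gt hx)
  have hs : Tendsto (slope h p) (nhdsWithin p (Set.Ioi p)) (nhds h') :=
    (hasDerivAt_iff_tendsto_slope.1 hd).mono_left hmono
  have hev : ∀ᶠ q in nhdsWithin p (Set.Ioi p), slope h p q < 0 :=
    hs.eventually_lt_const hp
  filter_upwards [hev, self_mem_nhdsWithin] with q hq hq0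
  have hq0' : p < q := hq0
  rw [slope_def_field, div_neg_iff] at hq
  rcases hq with ⟨h1, h2⟩ | ⟨h1, h2⟩
  · linarith
  · linarith

set_option maxHeartbeats 1000000 in
/-- Necessary conditions for the maximiser, ii-version: for a smooth
uniformly convex superlinear `H` and smooth uniformly convex limiter `A ≥ min_p H (·, p)`,
if the supremum defining `𝔊 (z', z)` is attained at a feasible `(p', p, λ)` (with
`H (p', p) = λ ≥ A p'`), then there is `α ∈ [0,1]` with `z = α ∂_p H (p', p)` and
`z' = α ∇_{p'} H (p', p) + (1 − α) ∇A p'`. -/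
theorem vertex_maximiser_multiplier_ii (d : ℕ)
    (H : EuclideanSpace ℝ (Fin d) × ℝ → ℝ)
    (hC2 : ContDiff ℝ 2 H)
    (hpos : ∀ P v : EuclideanSpace ℝ (Fin d) × ℝ, v ≠ 0 →
      0 < iteratedFDeriv ℝ 2 H P ![v, v])
    (hsup : ∀ M : ℝ, ∃ R : ℝ, ∀ P : EuclideanSpace ℝ (Fin d) × ℝ, R ≤ ‖P‖ → M * ‖P‖ ≤ H P)
    (A : EuclideanSpace ℝ (Fin d) → ℝ)
    (hAC2 : ContDiff ℝ 2 A)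
    (hApos : ∀ p' v : EuclideanSpace ℝ (Fin d), v ≠ 0 →
      0 < iteratedFDeriv ℝ 2 A p' ![v, v])
    (hAbound : ∀ p' : EuclideanSpace ℝ (Fin d), (⨅ p : ℝ, H (p', p)) ≤ A p')
    (z' : EuclideanSpace ℝ (Fin d)) (z : ℝ)
    (p' : EuclideanSpace ℝ (Fin d)) (p lam : ℝ)
    (hfeas : H (p', p) = lam ∧ A p' ≤ lam)
    (hmax : IsGreatest {v : ℝ | ∃ (q' : EuclideanSpace ℝ (Fin d)) (q mu : ℝ),
        H (q', q) = mu ∧ A q' ≤ mu ∧ v = ⟪q', z'⟫ + q * z - mu}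
      (⟪p', z'⟫ + p * z - lam)) :
    ∃ a : ℝ, 0 ≤ a ∧ a ≤ 1 ∧
      z = a * deriv (fun q : ℝ => H (p', q)) p ∧
      z' = a • gradient (fun q : EuclideanSpace ℝ (Fin d) => H (q, p)) p'
        + (1 - a) • gradient A p' := by
  classical
  obtain ⟨hHl, hAl⟩ := hfeas
  have hHd : Differentiable ℝ H := hC2.differentiable (by norm_num)
  have hAd : Differentiable ℝ A := hAC2.differentiable (by norm_num)
  set L : (EuclideanSpace ℝ (Fin d) × ℝ) →L[ℝ] ℝ := fderiv ℝ H (p', p) with hLdef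
  set aA : EuclideanSpace ℝ (Fin d) →L[ℝ] ℝ := fderiv ℝ A p' with haAdef
  -- derivative of the scalar section q ↦ H (p', q)
  have hsect : ∀ q : ℝ, HasDerivAt (fun t : ℝ => H (p', t))
      ((fderiv ℝ H (p', q)) ((0 : EuclideanSpace ℝ (Fin d)), (1:ℝ))) q := by
    intro q
    have h1 : HasDerivAt (fun t : ℝ => ((p', t) : EuclideanSpace ℝ (Fin d) × ℝ))
        ((0 : EuclideanSpace ℝ (Fin d)), (1:ℝ)) q :=
      (hasDerivAt_const q p').prodMk (hasDerivAt_id q)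
    exact ((hHd (p', q)).hasFDerivAt).comp_hasDerivAt q h1
  have hderiv : deriv (fun q : ℝ => H (p', q)) p
      = L ((0 : EuclideanSpace ℝ (Fin d)), (1:ℝ)) := (hsect p).deriv
  -- line derivatives
  have hline : ∀ u : EuclideanSpace ℝ (Fin d) × ℝ,
      HasDerivAt (fun t : ℝ => H ((p', p) + t • u)) (L u) 0 := by
    intro u
    have h1 : HasDerivAt (fun t : ℝ => ((p', p) : EuclideanSpace ℝ (Fin d) × ℝ) + t • u) u 0 := by
      simpa using ((hasDerivAt_id (0:ℝ)).smul_const u).const_add ((p', p) : EuclideanSpace ℝ (Fin d) × ℝ)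
    have h2 : HasFDerivAt H L ((fun t : ℝ => ((p', p) : EuclideanSpace ℝ (Fin d) × ℝ) + t • u) 0) := by
      simpa using (hHd (p', p)).hasFDerivAt
    exact h2.comp_hasDerivAt 0 h1
  have hlineA : ∀ v : EuclideanSpace ℝ (Fin d),
      HasDerivAt (fun t : ℝ => A (p' + t • v)) (aA v) 0 := by
    intro v
    have h1 : HasDerivAt (fun t : ℝ => p' + t • v) v 0 := by
      simpa using ((hasDerivAt_id (0:ℝ)).smul_const v).const_add p'
    have h2 : HasFDerivAt A aA ((fun t : ℝ => p' + t • v) 0) := by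
      simpa using (hAd p').hasFDerivAt
    exact h2.comp_hasDerivAt 0 h1
  -- gradients
  have hgradH : ∀ v : EuclideanSpace ℝ (Fin d),
      ⟪gradient (fun q' : EuclideanSpace ℝ (Fin d) => H (q', p)) p', v⟫ = L (v, (0:ℝ)) := by
    have h2 : HasFDerivAt (fun q' : EuclideanSpace ℝ (Fin d) => ((q', p) : EuclideanSpace ℝ (Fin d) × ℝ))
        ((ContinuousLinearMap.id ℝ (EuclideanSpace ℝ (Fin d))).prod 0) p' :=
      (hasFDerivAt_id p').prodMk (hasFDerivAt_const p p')
    have h1 : HasFDerivAt (fun q' : EuclideanSpace ℝ (Fin d) => H (q', p))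
        (L.comp ((ContinuousLinearMap.id ℝ (EuclideanSpace ℝ (Fin d))).prod 0)) p' :=
      ((hHd (p', p)).hasFDerivAt).comp p' h2
    intro v
    have hg : gradient (fun q' : EuclideanSpace ℝ (Fin d) => H (q', p)) p'
        = (InnerProductSpace.toDual ℝ (EuclideanSpace ℝ (Fin d))).symm
          (L.comp ((ContinuousLinearMap.id ℝ (EuclideanSpace ℝ (Fin d))).prod 0)) := by
      rw [show gradient (fun q' : EuclideanSpace ℝ (Fin d) => H (q', p)) p'
          = (InnerProductSpace.toDual ℝ (EuclideanSpace ℝ (Fin d))).symm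
            (fderiv ℝ (fun q' : EuclideanSpace ℝ (Fin d) => H (q', p)) p') from rfl, h1.fderiv]
    rw [hg, InnerProductSpace.toDual_symm_apply]
    simp
  have hgradA : ∀ v : EuclideanSpace ℝ (Fin d), ⟪gradient A p', v⟫ = aA v := by
    intro v
    rw [show gradient A p' = (InnerProductSpace.toDual ℝ (EuclideanSpace ℝ (Fin d))).symm
        (fderiv ℝ A p') from rfl, InnerProductSpace.toDual_symm_apply]
  -- use of maximality
  have huse : ∀ (q' : EuclideanSpace ℝ (Fin d)) (q mu : ℝ), H (q', q) = mu → A q' ≤ mu →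
      ⟪q', z'⟫ + q * z - mu ≤ ⟪p', z'⟫ + p * z - lam := by
    intro q' q mu h1 h2
    exact hmax.2 ⟨q', q, mu, h1, h2, rfl⟩
  -- the basic first-order inequality at the constrained maximum
  have key : ∀ u : EuclideanSpace ℝ (Fin d) × ℝ, (A p' = lam → aA u.1 - L u < 0) →
      ⟪u.1, z'⟫ + u.2 * z ≤ L u := by
    intro u hcond
    have hφ : HasDerivAt (fun t : ℝ => A (p' + t • u.1) - H ((p', p) + t • u)) (aA u.1 - L u) 0 :=
      (hlineA u.1).sub (hline u)
    have hev : ∀ᶠ t in nhdsWithin 0 (Set.Ioi (0:ℝ)),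
        A (p' + t • u.1) - H ((p', p) + t • u) ≤ 0 := by
      apply aux_ev_neg hφ
      · simpa [hHl] using hAl
      · intro h0
        apply hcond
        have : A p' - H (p', p) = 0 := by simpa using h0
        rw [hHl] at this; linarith
    have hval : ∀ᶠ t in nhdsWithin 0 (Set.Ioi (0:ℝ)),
        (⟪u.1, z'⟫ + u.2 * z) * t ≤
          H ((p', p) + t • u) - H ((p', p) + (0:ℝ) • u) := by
      filter_upwards [hev] with t ht
      have hfeas_t : A (p' + t • u.1) ≤ H ((p', p) + t • u) := by linarith
      have hptu : ((p', p) + t • u : EuclideanSpace ℝ (Fin d) × ℝ) = (p' + t • u.1, p + t * u.2) := by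
        simp [Prod.ext_iff, smul_eq_mul]
      have hv := huse (p' + t • u.1) (p + t * u.2) (H ((p', p) + t • u)) (by rw [hptu]) hfeas_t
      have hinner : ⟪p' + t • u.1, z'⟫ = ⟪p', z'⟫ + t * ⟪u.1, z'⟫ := by
        rw [inner_add_left, real_inner_smul_left]
      have h00 : H ((p', p) + (0:ℝ) • u) = lam := by simpa using hHl
      rw [h00]
      rw [hinner] at hv
      linarith [hv]
    exact aux_le_deriv (hline u) hval
  -- main case split
  rcases lt_or_eq_of_le hAl with hAlt | hAeq
  · -- inactive constraint: full stationarity, a = 1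
    have keyEq : ∀ u : EuclideanSpace ℝ (Fin d) × ℝ, ⟪u.1, z'⟫ + u.2 * z = L u := by
      intro u
      have h1 := key u (fun h => absurd h (ne_of_lt hAlt))
      have h2 := key (-u) (fun h => absurd h (ne_of_lt hAlt))
      rw [map_neg] at h2
      have : ⟪(-u).1, z'⟫ + (-u).2 * z = -(⟪u.1, z'⟫ + u.2 * z) := by
        simp [inner_neg_left]; ring
      rw [this] at h2
      linarith
    refine ⟨1, by norm_num, le_refl 1, ?_, ?_⟩
    · rw [hderiv]
      have := keyEq ((0 : EuclideanSpace ℝ (Fin d)), (1:ℝ))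
      simpa using this
    · rw [one_smul, sub_self, zero_smul, add_zero]
      refine ext_inner_left ℝ (fun v => ?_)
      have h1 := keyEq (v, (0:ℝ))
      have h2 := hgradH v
      rw [real_inner_comm] at h2
      rw [h2]
      simpa using h1
  · -- active constraint: A p' = lam
    -- existence of second crossing point q₁ when the partial derivative in p is nonzero
    have hq₁ : L ((0 : EuclideanSpace ℝ (Fin d)), (1:ℝ)) ≠ 0 →
        ∃ q₁ : ℝ, (q₁ - p) * L ((0 : EuclideanSpace ℝ (Fin d)), (1:ℝ)) < 0 ∧ H (p', q₁) = lam := by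
      intro hne
      have hcontsect : Continuous (fun q : ℝ => H (p', q)) :=
        hHd.continuous.comp (continuous_const.prodMk continuous_id)
      obtain ⟨R, hR⟩ := hsup 1
      rcases lt_or_gt_of_ne hne with hneg | hpos'
      · -- L (0,1) < 0 : section decreases to the right of p; superlinear at +∞
        obtain ⟨q₂, hq₂val, hq₂p⟩ : ∃ q₂, H (p', q₂) < lam ∧ p < q₂ := by
          have hev := aux_ev_lt_right (hsect p) hneg
          obtain ⟨q₂, h1, h2⟩ := (hev.and self_mem_nhdsWithin).exists
          exact ⟨q₂, by rw [← hHl]; exact h1, h2⟩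
        set Q : ℝ := 1 + |R| + |lam| + |q₂| with hQdef
        have hq₂Q : q₂ ≤ Q := by
          have h1 := abs_nonneg R; have h2 := abs_nonneg lam; have h3 := le_abs_self q₂; linarith
        have hQabs : |Q| = 1 + |R| + |lam| + |q₂| := by
          rw [hQdef, abs_of_nonneg (by positivity)]
        have h2 : |Q| ≤ ‖((p', Q) : EuclideanSpace ℝ (Fin d) × ℝ)‖ := by
          rw [Prod.norm_def]; simpa using le_max_right ‖p'‖ |Q|
        have hHQ : lam ≤ H (p', Q) := by
          have h3 : R ≤ |Q| := by
            rw [hQabs]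
            have := le_abs_self R; have := abs_nonneg lam; have := abs_nonneg q₂; linarith
          have h4 := hR _ (le_trans h3 h2)
          rw [one_mul] at h4
          have h5 : lam ≤ |Q| := by
            rw [hQabs]
            have := le_abs_self lam; have := abs_nonneg R; have := abs_nonneg q₂; linarith
          linarith
        have hmem : lam ∈ Set.Icc (H (p', q₂)) (H (p', Q)) := ⟨le_of_lt hq₂val, hHQ⟩
        obtain ⟨q₁, hq₁mem, hq₁val⟩ :=
          intermediate_value_Icc hq₂Q hcontsect.continuousOn hmem
        refine ⟨q₁, ?_, hq₁val⟩
        have h6 : p < q₁ := lt_of_lt_of_le hq₂p hq₁mem.1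
        have h7 : 0 < q₁ - p := by linarith
        exact mul_neg_of_pos_of_neg h7 hneg
      · -- L (0,1) > 0 : section decreases to the left of p; superlinear at -∞
        obtain ⟨q₂, hq₂val, hq₂p⟩ : ∃ q₂, H (p', q₂) < lam ∧ q₂ < p := by
          have hev := aux_ev_lt_left (hsect p) hpos'
          obtain ⟨q₂, h1, h2⟩ := (hev.and self_mem_nhdsWithin).exists
          exact ⟨q₂, by rw [← hHl]; exact h1, h2⟩
        set Q : ℝ := -(1 + |R| + |lam| + |q₂|) with hQdef
        have hq₂Q : Q ≤ q₂ := by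
          have h1 := abs_nonneg R; have h2 := abs_nonneg lam; have h3 := neg_abs_le q₂; linarith
        have hQabs : |Q| = 1 + |R| + |lam| + |q₂| := by
          rw [hQdef, abs_neg, abs_of_nonneg (by positivity)]
        have h2 : |Q| ≤ ‖((p', Q) : EuclideanSpace ℝ (Fin d) × ℝ)‖ := by
          rw [Prod.norm_def]; simpa using le_max_right ‖p'‖ |Q|
        have hHQ : lam ≤ H (p', Q) := by
          have h3 : R ≤ |Q| := by
            rw [hQabs]
            have := le_abs_self R; have := abs_nonneg lam; have := abs_nonneg q₂; linarith
          have h4 := hR _ (le_trans h3 h2)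
          rw [one_mul] at h4
          have h5 : lam ≤ |Q| := by
            rw [hQabs]
            have := le_abs_self lam; have := abs_nonneg R; have := abs_nonneg q₂; linarith
          linarith
        have hmem : lam ∈ Set.Icc (H (p', q₂)) (H (p', Q)) := ⟨le_of_lt hq₂val, hHQ⟩
        obtain ⟨q₁, hq₁mem, hq₁val⟩ :=
          intermediate_value_Icc' hq₂Q hcontsect.continuousOn hmem
        refine ⟨q₁, ?_, hq₁val⟩
        have h6 : q₁ < p := lt_of_le_of_lt hq₁mem.2 hq₂p
        have h7 : q₁ - p < 0 := by linarith
        exact mul_neg_of_neg_of_pos h7 hpos'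
    rcases eq_or_ne (L ((0 : EuclideanSpace ℝ (Fin d)), (1:ℝ))) 0 with hL1 | hL1
    · -- degenerate case: ∂_p H (p', p) = 0
      have hF2 : ContDiff ℝ 1 (fderiv ℝ H) := hC2.fderiv_right (by norm_num)
      have hd2 : ∀ q : ℝ, HasDerivAt
          (fun t : ℝ => (fderiv ℝ H (p', t)) ((0 : EuclideanSpace ℝ (Fin d)), (1:ℝ)))
          (iteratedFDeriv ℝ 2 H (p', q)
            ![((0 : EuclideanSpace ℝ (Fin d)), (1:ℝ)), ((0 : EuclideanSpace ℝ (Fin d)), (1:ℝ))]) q := by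
        intro q
        have h1 : HasDerivAt (fun t : ℝ => ((p', t) : EuclideanSpace ℝ (Fin d) × ℝ))
            ((0 : EuclideanSpace ℝ (Fin d)), (1:ℝ)) q :=
          (hasDerivAt_const q p').prodMk (hasDerivAt_id q)
        have h2 : HasDerivAt (fun t : ℝ => fderiv ℝ H (p', t))
            ((fderiv ℝ (fderiv ℝ H) (p', q)) ((0 : EuclideanSpace ℝ (Fin d)), (1:ℝ))) q :=
          (((hF2.differentiable one_ne_zero) (p', q)).hasFDerivAt).comp_hasDerivAt q h1
        have h3 := ((ContinuousLinearMap.apply ℝ ℝ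
          ((0 : EuclideanSpace ℝ (Fin d)), (1:ℝ))).hasFDerivAt).comp_hasDerivAt q h2
        have h4 : iteratedFDeriv ℝ 2 H (p', q)
            ![((0 : EuclideanSpace ℝ (Fin d)), (1:ℝ)), ((0 : EuclideanSpace ℝ (Fin d)), (1:ℝ))]
            = (fderiv ℝ (fderiv ℝ H) (p', q)) ((0 : EuclideanSpace ℝ (Fin d)), (1:ℝ))
              ((0 : EuclideanSpace ℝ (Fin d)), (1:ℝ)) := by
          rw [iteratedFDeriv_two_apply]; simp
        rw [h4]
        exact h3
      have hmono2 : StrictMono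
          (fun q : ℝ => (fderiv ℝ H (p', q)) ((0 : EuclideanSpace ℝ (Fin d)), (1:ℝ))) := by
        apply strictMono_of_deriv_pos
        intro q
        rw [(hd2 q).deriv]
        exact hpos (p', q) ((0 : EuclideanSpace ℝ (Fin d)), (1:ℝ)) (by simp [Prod.ext_iff])
      have hfp0 : (fderiv ℝ H (p', p)) ((0 : EuclideanSpace ℝ (Fin d)), (1:ℝ)) = 0 := hL1
      have hcontsect : Continuous (fun q : ℝ => H (p', q)) :=
        hHd.continuous.comp (continuous_const.prodMk continuous_id)
      have hminh : ∀ q : ℝ, H (p', p) ≤ H (p', q) := by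
        intro q
        rcases lt_trichotomy q p with hlt | heqq | hgt
        · have hA2 : StrictAntiOn (fun t : ℝ => H (p', t)) (Set.Iic p) := by
            apply strictAntiOn_of_deriv_neg (convex_Iic p) hcontsect.continuousOn
            intro x hx
            rw [interior_Iic] at hx
            rw [(hsect x).deriv]
            have h5 : (fderiv ℝ H (p', x)) ((0 : EuclideanSpace ℝ (Fin d)), (1:ℝ))
                < (fderiv ℝ H (p', p)) ((0 : EuclideanSpace ℝ (Fin d)), (1:ℝ)) :=
              hmono2 (show x < p from hx)
            rw [hfp0] at h5
            exact h5
          exact le_of_lt (hA2 (Set.mem_Iic.2 (le_of_lt hlt)) (Set.mem_Iic.2 (le_refl p)) hlt)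
        · rw [heqq]
        · have hM2 : StrictMonoOn (fun t : ℝ => H (p', t)) (Set.Ici p) := by
            apply strictMonoOn_of_deriv_pos (convex_Ici p) hcontsect.continuousOn
            intro x hx
            rw [interior_Ici] at hx
            rw [(hsect x).deriv]
            have h5 : (fderiv ℝ H (p', p)) ((0 : EuclideanSpace ℝ (Fin d)), (1:ℝ))
                < (fderiv ℝ H (p', x)) ((0 : EuclideanSpace ℝ (Fin d)), (1:ℝ)) :=
              hmono2 (show p < x from hx)
            rw [hfp0] at h5
            exact h5
          exact le_of_lt (hM2 (Set.mem_Ici.2 (le_refl p)) (Set.mem_Ici.2 (le_of_lt hgt)) hgt)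
      have hz0 : z = 0 := by
        have hmaxq : IsMaxOn (fun q : ℝ => q * z - H (p', q)) Set.univ p := by
          intro q _
          simp only [Set.mem_setOf_eq]
          have h7 : A p' ≤ H (p', q) := by rw [hAeq, ← hHl]; exact hminh q
          have h8 := huse p' q (H (p', q)) rfl h7
          have h9 : H (p', p) = lam := hHl
          linarith
        have hld : HasDerivAt (fun q : ℝ => q * z - H (p', q))
            (1 * z - (fderiv ℝ H (p', p)) ((0 : EuclideanSpace ℝ (Fin d)), (1:ℝ))) p :=
          ((hasDerivAt_id p).mul_const z).sub (hsect p)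
        have h10 := (hmaxq.isLocalMax Filter.univ_mem).hasDerivAt_eq_zero hld
        rw [hfp0] at h10
        linarith
      have hmaxineq : ∀ v : EuclideanSpace ℝ (Fin d),
          ⟪v, z'⟫ ≤ max (aA v) (L (v, (0:ℝ))) := by
        intro v
        refine aux_le_max_deriv (hlineA v) (hline (v, (0:ℝ))) ?_
        filter_upwards [self_mem_nhdsWithin] with t ht
        have ht0 : (0:ℝ) < t := ht
        show (⟪v, z'⟫ : ℝ) * t ≤ max (A (p' + t • v) - A (p' + (0:ℝ) • v))
          (H ((p', p) + t • ((v, (0:ℝ)) : EuclideanSpace ℝ (Fin d) × ℝ))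
            - H ((p', p) + (0:ℝ) • ((v, (0:ℝ)) : EuclideanSpace ℝ (Fin d) × ℝ)))
        have hpt : ((p', p) + t • ((v, (0:ℝ)) : EuclideanSpace ℝ (Fin d) × ℝ)) = (p' + t • v, p) := by
          simp [Prod.ext_iff]
        have hg₁0 : A (p' + (0:ℝ) • v) = A p' := by simp
        have hg₂0 : H ((p', p) + (0:ℝ) • ((v, (0:ℝ)) : EuclideanSpace ℝ (Fin d) × ℝ)) = lam := by
          simpa using hHl
        have hinner : ⟪p' + t • v, z'⟫ = ⟪p', z'⟫ + t * ⟪v, z'⟫ := by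
          rw [inner_add_left, real_inner_smul_left]
        rcases le_or_gt (H (p' + t • v, p)) (A (p' + t • v)) with hcase | hcase
        · -- reach the level set of A by IVT
          obtain ⟨R, hR⟩ := hsup 1
          set Q : ℝ := 1 + |R| + |A (p' + t • v)| + |p| with hQdef
          have hQabs : |Q| = 1 + |R| + |A (p' + t • v)| + |p| := by
            rw [hQdef, abs_of_nonneg (by positivity)]
          have hpQ : p ≤ Q := by
            have h1 := le_abs_self p; have h2 := abs_nonneg R
            have h3 := abs_nonneg (A (p' + t • v)); linarith
          have hHQ : A (p' + t • v) ≤ H (p' + t • v, Q) := by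
            have h2 : |Q| ≤ ‖((p' + t • v, Q) : EuclideanSpace ℝ (Fin d) × ℝ)‖ := by
              rw [Prod.norm_def]; simpa using le_max_right ‖p' + t • v‖ |Q|
            have h3 : R ≤ |Q| := by
              rw [hQabs]
              have := le_abs_self R; have := abs_nonneg (A (p' + t • v)); have := abs_nonneg p
              linarith
            have h4 := hR _ (le_trans h3 h2)
            rw [one_mul] at h4
            have h5 : A (p' + t • v) ≤ |Q| := by
              rw [hQabs]
              have := le_abs_self (A (p' + t • v)); have := abs_nonneg R; have := abs_nonneg p
              linarith
            linarith
          have hcont2 : ContinuousOn (fun q : ℝ => H (p' + t • v, q)) (Set.Icc p Q) :=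
            (hHd.continuous.comp (continuous_const.prodMk continuous_id)).continuousOn
          obtain ⟨q, hqmem, hqval⟩ := intermediate_value_Icc hpQ hcont2 ⟨hcase, hHQ⟩
          have h8 := huse (p' + t • v) q (A (p' + t • v)) hqval (le_refl _)
          refine le_max_of_le_left ?_
          rw [hg₁0]
          rw [hinner, hz0] at h8
          simp only [mul_zero, add_zero] at h8
          have h9 : A p' = lam := hAeq
          linarith
        · -- the point (p' + t v, p) is itself feasible
          have h8 := huse (p' + t • v) p (H (p' + t • v, p)) rfl (le_of_lt hcase)
          refine le_max_of_le_right ?_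
          rw [hpt, hg₂0]
          rw [hinner] at h8
          linarith
      obtain ⟨c, hc0, hc1, hcomb⟩ := aux_lin_max
        ((innerSL ℝ z' : EuclideanSpace ℝ (Fin d) →L[ℝ] ℝ) : EuclideanSpace ℝ (Fin d) →ₗ[ℝ] ℝ)
        ((aA : EuclideanSpace ℝ (Fin d) →L[ℝ] ℝ) : EuclideanSpace ℝ (Fin d) →ₗ[ℝ] ℝ)
        ((L.comp (ContinuousLinearMap.inl ℝ (EuclideanSpace ℝ (Fin d)) ℝ)
          : EuclideanSpace ℝ (Fin d) →L[ℝ] ℝ) : EuclideanSpace ℝ (Fin d) →ₗ[ℝ] ℝ)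
        (fun v => by
          have h1 := hmaxineq v
          rw [real_inner_comm] at h1
          simpa [ContinuousLinearMap.coe_coe, innerSL_apply_apply, ContinuousLinearMap.comp_apply,
            ContinuousLinearMap.inl_apply] using h1)
      refine ⟨c, hc0, hc1, ?_, ?_⟩
      · rw [hderiv, hL1, mul_zero]; exact hz0
      · refine ext_inner_left ℝ (fun v => ?_)
        have h1 := hcomb v
        simp only [ContinuousLinearMap.coe_coe, innerSL_apply_apply, ContinuousLinearMap.comp_apply,
          ContinuousLinearMap.inl_apply] at h1
        rw [real_inner_comm] at h1
        have h2 := hgradH v; rw [real_inner_comm] at h2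
        have h3 := hgradA v; rw [real_inner_comm] at h3
        rw [inner_add_right, real_inner_smul_right, real_inner_smul_right, h2, h3]
        linarith [h1]
    · -- nondegenerate case: ∂_p H (p', p) ≠ 0
      obtain ⟨q₁, hq₁sign, hq₁val⟩ := hq₁ hL1
      have hFGhyp : ∀ u : EuclideanSpace ℝ (Fin d) × ℝ,
          aA u.1 - L u < 0 → ⟪u.1, z'⟫ + u.2 * z - L u ≤ 0 := by
        intro u hu
        have := key u (fun _ => hu)
        linarith
      set Fc : (EuclideanSpace ℝ (Fin d) × ℝ) →L[ℝ] ℝ :=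
        ((innerSL ℝ z').comp (ContinuousLinearMap.fst ℝ (EuclideanSpace ℝ (Fin d)) ℝ)
          + z • ContinuousLinearMap.snd ℝ (EuclideanSpace ℝ (Fin d)) ℝ) - L with hFcdef
      set Gc : (EuclideanSpace ℝ (Fin d) × ℝ) →L[ℝ] ℝ :=
        aA.comp (ContinuousLinearMap.fst ℝ (EuclideanSpace ℝ (Fin d)) ℝ) - L with hGcdef
      have hFc_apply : ∀ u : EuclideanSpace ℝ (Fin d) × ℝ,
          Fc u = ⟪u.1, z'⟫ + u.2 * z - L u := by
        intro u
        rw [hFcdef]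
        simp only [ContinuousLinearMap.sub_apply, ContinuousLinearMap.add_apply,
          ContinuousLinearMap.comp_apply, ContinuousLinearMap.coe_fst',
          ContinuousLinearMap.smul_apply, ContinuousLinearMap.coe_snd', innerSL_apply_apply,
          smul_eq_mul]
        rw [real_inner_comm]; ring
      have hGc_apply : ∀ u : EuclideanSpace ℝ (Fin d) × ℝ, Gc u = aA u.1 - L u := by
        intro u
        rw [hGcdef]
        simp only [ContinuousLinearMap.sub_apply, ContinuousLinearMap.comp_apply,
          ContinuousLinearMap.coe_fst']
      have hGcneg : ∃ u₀ : EuclideanSpace ℝ (Fin d) × ℝ, Gc u₀ < 0 := by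
        rcases lt_or_gt_of_ne hL1 with hn | hp2
        · refine ⟨((0 : EuclideanSpace ℝ (Fin d)), (-1:ℝ)), ?_⟩
          rw [hGc_apply]
          have hL' : L ((0 : EuclideanSpace ℝ (Fin d)), (-1:ℝ))
              = -L ((0 : EuclideanSpace ℝ (Fin d)), (1:ℝ)) := by
            rw [show ((0 : EuclideanSpace ℝ (Fin d)), (-1:ℝ))
              = -((0 : EuclideanSpace ℝ (Fin d)), (1:ℝ)) from by simp [Prod.ext_iff], map_neg]
          show aA (0 : EuclideanSpace ℝ (Fin d))
            - L ((0 : EuclideanSpace ℝ (Fin d)), (-1:ℝ)) < 0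
          rw [hL', map_zero]
          linarith
        · refine ⟨((0 : EuclideanSpace ℝ (Fin d)), (1:ℝ)), ?_⟩
          rw [hGc_apply]
          show aA (0 : EuclideanSpace ℝ (Fin d))
            - L ((0 : EuclideanSpace ℝ (Fin d)), (1:ℝ)) < 0
          rw [map_zero]
          linarith
      obtain ⟨u₀, hu₀⟩ := hGcneg
      obtain ⟨c, hc0, hc⟩ := aux_lin_halfspace
        ((Fc : (EuclideanSpace ℝ (Fin d) × ℝ) →L[ℝ] ℝ) : (EuclideanSpace ℝ (Fin d) × ℝ) →ₗ[ℝ] ℝ)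
        ((Gc : (EuclideanSpace ℝ (Fin d) × ℝ) →L[ℝ] ℝ) : (EuclideanSpace ℝ (Fin d) × ℝ) →ₗ[ℝ] ℝ)
        (fun u hu => by
          simp only [ContinuousLinearMap.coe_coe] at hu ⊢
          rw [hFc_apply]
          rw [hGc_apply] at hu
          exact hFGhyp u hu) u₀ (by simpa [ContinuousLinearMap.coe_coe] using hu₀)
      have hc' : ∀ u : EuclideanSpace ℝ (Fin d) × ℝ, Fc u = c * Gc u := hc
      have hz : z = (1 - c) * L ((0 : EuclideanSpace ℝ (Fin d)), (1:ℝ)) := by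
        have h1 := hc' ((0 : EuclideanSpace ℝ (Fin d)), (1:ℝ))
        rw [hFc_apply, hGc_apply] at h1
        simp only [map_zero, inner_zero_left, one_mul, zero_add, zero_sub] at h1
        linarith [h1]
      have hc1 : c ≤ 1 := by
        by_contra hgt
        push_neg at hgt
        have h8 := huse p' q₁ lam hq₁val (le_of_eq hAeq)
        have hzq : (q₁ - p) * z ≤ 0 := by nlinarith [h8]
        have h2 : (q₁ - p) * z
            = (1 - c) * ((q₁ - p) * L ((0 : EuclideanSpace ℝ (Fin d)), (1:ℝ))) := by
          rw [hz]; ring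
        have h3 : 0 < (1 - c) * ((q₁ - p) * L ((0 : EuclideanSpace ℝ (Fin d)), (1:ℝ))) :=
          mul_pos_of_neg_of_neg (by linarith) hq₁sign
        linarith
      refine ⟨1 - c, by linarith, by linarith, ?_, ?_⟩
      · rw [hderiv]; exact hz
      · refine ext_inner_left ℝ (fun v => ?_)
        have h1 := hc' (v, (0:ℝ))
        rw [hFc_apply, hGc_apply] at h1
        simp only [zero_mul, add_zero] at h1
        have h2 := hgradH v; rw [real_inner_comm] at h2
        have h3 := hgradA v; rw [real_inner_comm] at h3
        rw [inner_add_right, real_inner_smul_right, real_inner_smul_right, h2, h3]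
        linarith [h1]
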